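/- Let α > 0 and let q_1, …, q_n be pairwise distinct real numbers with 2 ≤ n ≤ 6, and let Q be the associated n×n skew-symmetric matrix with entries Q_{ij} = q_{ij}|q_{ij}|^{−α−2}. If n is even then Pf Q ≠ 0; if n is odd then Pf(B(Q)) ≠ 0, where B(Q) is the (n+1)×(n+1) bordered matrix of Q. Moreover, for n = 5 and q_1 > q_2 > q_3 > q_4 > q_5, one has Pf(B(Q)) > 0. -/

import Mathlib

open scoped BigOperators

/-- The Pfaffian of an `n × n` real matrix (intended for skew-symmetric matrices
with `n` even), given by the formula
`Pf A = (1/(2^k k!)) ∑_{σ ∈ S_{2k}} sgn(σ) ∏_{i=1}^k A_{σ(2i-1),σ(2i)}` with `k = n/2`. -/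
noncomputable def Pf {n : ℕ} (A : Matrix (Fin n) (Fin n) ℝ) : ℝ :=
  (1 / (2 ^ (n / 2) * (Nat.factorial (n / 2)) : ℝ)) *
    ∑ σ : Equiv.Perm (Fin n), ((Equiv.Perm.sign σ : ℤ) : ℝ) *
      ∏ i : Fin (n / 2),
        A (σ ⟨2 * i.val, by have := i.isLt; omega⟩)
          (σ ⟨2 * i.val + 1, by have := i.isLt; omega⟩)

/-- The bordered matrix `B(A)` of an `m × m` skew-symmetric matrix `A`. -/
def border {m : ℕ} (A : Matrix (Fin m) (Fin m) ℝ) :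
    Matrix (Fin (m + 1)) (Fin (m + 1)) ℝ := fun i j =>
  if hi : (i : ℕ) < m then
    if hj : (j : ℕ) < m then A ⟨i, hi⟩ ⟨j, hj⟩ else 1
  else if (j : ℕ) < m then -1 else 0


/-! ### Auxiliary infrastructure -/

section Aux

open Equiv

lemma sum_perm_succ {n : ℕ} (f : Equiv.Perm (Fin (n+1)) → ℝ) :
    ∑ σ : Equiv.Perm (Fin (n+1)), f σ =
      ∑ p : Fin (n+1), ∑ τ : Equiv.Perm (Fin n),
        f (Equiv.Perm.decomposeFin.symm (p, τ)) := by
  rw [← Equiv.sum_comp Equiv.Perm.decomposeFin.symm f, Fintype.sum_prod_type]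

lemma sum_perm_zero (f : Equiv.Perm (Fin 0) → ℝ) :
    ∑ σ : Equiv.Perm (Fin 0), f σ = f 1 := by
  rw [Finset.sum_eq_single_of_mem 1 (Finset.mem_univ _)]
  intro b _ _
  exact absurd (Subsingleton.elim b 1) ‹b ≠ 1›

lemma mk20 (h : 0 < 2) : (⟨0, h⟩ : Fin 2) = 0 := rfl
lemma mk21 (h : 1 < 2) : (⟨1, h⟩ : Fin 2) = Fin.succ 0 := rfl

lemma mk40 (h : 0 < 4) : (⟨0, h⟩ : Fin 4) = 0 := rfl
lemma mk41 (h : 1 < 4) : (⟨1, h⟩ : Fin 4) = Fin.succ 0 := rfl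
lemma mk42 (h : 2 < 4) : (⟨2, h⟩ : Fin 4) = Fin.succ (Fin.succ 0) := rfl
lemma mk43 (h : 3 < 4) : (⟨3, h⟩ : Fin 4) = Fin.succ (Fin.succ (Fin.succ 0)) := rfl

lemma mk60 (h : 0 < 6) : (⟨0, h⟩ : Fin 6) = 0 := rfl
lemma mk61 (h : 1 < 6) : (⟨1, h⟩ : Fin 6) = Fin.succ 0 := rfl
lemma mk62 (h : 2 < 6) : (⟨2, h⟩ : Fin 6) = Fin.succ (Fin.succ 0) := rfl
lemma mk63 (h : 3 < 6) : (⟨3, h⟩ : Fin 6) = Fin.succ (Fin.succ (Fin.succ 0)) := rfl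
lemma mk64 (h : 4 < 6) : (⟨4, h⟩ : Fin 6) = Fin.succ (Fin.succ (Fin.succ (Fin.succ 0))) := rfl
lemma mk65 (h : 5 < 6) :
    (⟨5, h⟩ : Fin 6) = Fin.succ (Fin.succ (Fin.succ (Fin.succ (Fin.succ 0)))) := rfl

lemma zero_ne_succ' {n : ℕ} (x : Fin n) : ((0 : Fin (n+1)) = x.succ) = False := by
  simp [(Fin.succ_ne_zero x).symm]

lemma s10 : Fin.succ (0 : Fin 1) = 1 := rfl
lemma s20 : Fin.succ (0 : Fin 2) = 1 := rfl
lemma s30 : Fin.succ (0 : Fin 3) = 1 := rfl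
lemma s40 : Fin.succ (0 : Fin 4) = 1 := rfl
lemma s50 : Fin.succ (0 : Fin 5) = 1 := rfl
lemma s21 : Fin.succ (1 : Fin 2) = 2 := rfl
lemma s31 : Fin.succ (1 : Fin 3) = 2 := rfl
lemma s41 : Fin.succ (1 : Fin 4) = 2 := rfl
lemma s51 : Fin.succ (1 : Fin 5) = 2 := rfl
lemma s32 : Fin.succ (2 : Fin 3) = 3 := rfl
lemma s42 : Fin.succ (2 : Fin 4) = 3 := rfl
lemma s52 : Fin.succ (2 : Fin 5) = 3 := rfl
lemma s43 : Fin.succ (3 : Fin 4) = 4 := rfl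
lemma s53 : Fin.succ (3 : Fin 5) = 4 := rfl
lemma s54 : Fin.succ (4 : Fin 5) = 5 := rfl

set_option maxHeartbeats 1000000 in
lemma pf2 (A : Matrix (Fin 2) (Fin 2) ℝ) (hA : ∀ i j, A j i = - A i j) :
    Pf A = A 0 1 := by
  rw [Pf]
  simp only [sum_perm_succ, sum_perm_zero]
  simp only [Fin.sum_univ_succ, Fin.sum_univ_zero, Fin.prod_univ_succ, Fin.prod_univ_zero,
    Finset.sum_empty, Finset.prod_empty, Finset.univ_eq_empty,
    Fin.val_succ, Fin.val_zero, Nat.reduceMul, Nat.reduceAdd, Nat.reduceLT,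
    mk20, mk21,
    Equiv.Perm.decomposeFin_symm_apply_zero, Equiv.Perm.decomposeFin_symm_apply_succ,
    Equiv.Perm.decomposeFin.symm_sign, Equiv.Perm.sign_one, Equiv.Perm.one_apply,
    Equiv.swap_self, Equiv.refl_apply, Equiv.swap_apply_left, Equiv.swap_apply_right,
    Equiv.swap_apply_of_ne_of_ne, ne_eq, Fin.succ_inj, Fin.succ_ne_zero, zero_ne_succ',
    eq_self_iff_true, not_false_eq_true, not_true, if_true, if_false, ite_true, ite_false,
    Units.val_mul, Units.val_one, Units.val_neg, Int.cast_mul, Int.cast_one, Int.cast_neg,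
    one_mul, mul_one, neg_mul, mul_neg, neg_neg]
  simp only [s10]
  rw [hA 0 1]
  norm_num [Nat.factorial]
  ring

set_option maxHeartbeats 1000000 in
lemma pf4 (A : Matrix (Fin 4) (Fin 4) ℝ) (hA : ∀ i j, A j i = - A i j) :
    Pf A = A 0 1 * A 2 3 - A 0 2 * A 1 3 + A 0 3 * A 1 2 := by
  rw [Pf]
  simp only [sum_perm_succ, sum_perm_zero]
  simp only [Fin.sum_univ_succ, Fin.sum_univ_zero, Fin.prod_univ_succ, Fin.prod_univ_zero,
    Finset.sum_empty, Finset.prod_empty, Finset.univ_eq_empty,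
    Fin.val_succ, Fin.val_zero, Nat.reduceMul, Nat.reduceAdd, Nat.reduceLT,
    mk40, mk41, mk42, mk43,
    Equiv.Perm.decomposeFin_symm_apply_zero, Equiv.Perm.decomposeFin_symm_apply_succ,
    Equiv.Perm.decomposeFin.symm_sign, Equiv.Perm.sign_one, Equiv.Perm.one_apply,
    Equiv.swap_self, Equiv.refl_apply, Equiv.swap_apply_left, Equiv.swap_apply_right,
    Equiv.swap_apply_of_ne_of_ne, ne_eq, Fin.succ_inj, Fin.succ_ne_zero, zero_ne_succ',
    eq_self_iff_true, not_false_eq_true, not_true, if_true, if_false, ite_true, ite_false,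
    Units.val_mul, Units.val_one, Units.val_neg, Int.cast_mul, Int.cast_one, Int.cast_neg,
    one_mul, mul_one, neg_mul, mul_neg, neg_neg]
  simp only [s10, s20, s30, s21, s31, s32]
  rw [hA 0 1, hA 0 2, hA 0 3, hA 1 2, hA 1 3, hA 2 3]
  norm_num [Nat.factorial]
  ring

set_option maxHeartbeats 4000000 in
set_option maxRecDepth 10000 in
lemma pf6 (A : Matrix (Fin 6) (Fin 6) ℝ) (hA : ∀ i j, A j i = - A i j) :
    Pf A = A 0 1 * A 2 3 * A 4 5 - A 0 1 * A 2 4 * A 3 5 + A 0 1 * A 2 5 * A 3 4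
        - A 0 2 * A 1 3 * A 4 5 + A 0 2 * A 1 4 * A 3 5 - A 0 2 * A 1 5 * A 3 4
        + A 0 3 * A 1 2 * A 4 5 - A 0 3 * A 1 4 * A 2 5 + A 0 3 * A 1 5 * A 2 4
        - A 0 4 * A 1 2 * A 3 5 + A 0 4 * A 1 3 * A 2 5 - A 0 4 * A 1 5 * A 2 3
        + A 0 5 * A 1 2 * A 3 4 - A 0 5 * A 1 3 * A 2 4 + A 0 5 * A 1 4 * A 2 3 := by
  rw [Pf]
  simp only [sum_perm_succ, sum_perm_zero]
  simp only [Fin.sum_univ_succ, Fin.sum_univ_zero, Fin.prod_univ_succ, Fin.prod_univ_zero,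
    Finset.sum_empty, Finset.prod_empty, Finset.univ_eq_empty,
    Fin.val_succ, Fin.val_zero, Nat.reduceMul, Nat.reduceAdd, Nat.reduceLT,
    mk60, mk61, mk62, mk63, mk64, mk65,
    Equiv.Perm.decomposeFin_symm_apply_zero, Equiv.Perm.decomposeFin_symm_apply_succ,
    Equiv.Perm.decomposeFin.symm_sign, Equiv.Perm.sign_one, Equiv.Perm.one_apply,
    Equiv.swap_self, Equiv.refl_apply, Equiv.swap_apply_left, Equiv.swap_apply_right,
    Equiv.swap_apply_of_ne_of_ne, ne_eq, Fin.succ_inj, Fin.succ_ne_zero, zero_ne_succ',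
    eq_self_iff_true, not_false_eq_true, not_true, if_true, if_false, ite_true, ite_false,
    Units.val_mul, Units.val_one, Units.val_neg, Int.cast_mul, Int.cast_one, Int.cast_neg,
    one_mul, mul_one, neg_mul, mul_neg, neg_neg]
  simp only [s10, s20, s30, s40, s50, s21, s31, s41, s51, s32, s42, s52, s43, s53, s54]
  rw [hA 0 1, hA 0 2, hA 0 3, hA 0 4, hA 0 5, hA 1 2, hA 1 3, hA 1 4, hA 1 5,
     hA 2 3, hA 2 4, hA 2 5, hA 3 4, hA 3 5, hA 4 5]
  norm_num [Nat.factorial]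
  ring

lemma sum_perm_mulLeft {n : ℕ} (σ : Equiv.Perm (Fin n)) (g : Equiv.Perm (Fin n) → ℝ) :
    ∑ π : Equiv.Perm (Fin n), g (σ * π) = ∑ ρ : Equiv.Perm (Fin n), g ρ :=
  Equiv.sum_comp (Equiv.mulLeft σ) g

lemma Pf_conj {n : ℕ} (A : Matrix (Fin n) (Fin n) ℝ) (σ : Equiv.Perm (Fin n)) :
    Pf (fun i j => A (σ i) (σ j)) = ((Equiv.Perm.sign σ : ℤ) : ℝ) * Pf A := by
  unfold Pf
  rw [mul_comm (((Equiv.Perm.sign σ : ℤ) : ℝ)) _, mul_assoc]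
  congr 1
  rw [Finset.sum_mul]
  conv_rhs => rw [← sum_perm_mulLeft σ]
  apply Finset.sum_congr rfl
  intro π _
  have happ : ∀ x : Fin n, (σ * π) x = σ (π x) := fun x => rfl
  simp only [happ, map_mul]
  rcases Int.units_eq_one_or (Equiv.Perm.sign σ) with h | h <;>
    rcases Int.units_eq_one_or (Equiv.Perm.sign π) with h2 | h2 <;>
      simp [h, h2]

def extPerm {m : ℕ} (τ : Equiv.Perm (Fin m)) : Equiv.Perm (Fin (m + 1)) where
  toFun i := if h : (i : ℕ) < m then Fin.castSucc (τ ⟨i, h⟩) else i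
  invFun i := if h : (i : ℕ) < m then Fin.castSucc (τ⁻¹ ⟨i, h⟩) else i
  left_inv i := by
    by_cases h : (i : ℕ) < m
    · simp only [dif_pos h, Fin.coe_castSucc, Fin.is_lt, dif_pos, Fin.eta,
        Equiv.Perm.coe_inv, Equiv.symm_apply_apply]
      exact Fin.ext rfl
    · simp only [dif_neg h]
  right_inv i := by
    by_cases h : (i : ℕ) < m
    · simp only [dif_pos h, Fin.coe_castSucc, Fin.is_lt, dif_pos, Fin.eta,
        Equiv.Perm.coe_inv, Equiv.apply_symm_apply]
      exact Fin.ext rfl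
    · simp only [dif_neg h]

lemma border_conj {m : ℕ} (A : Matrix (Fin m) (Fin m) ℝ) (τ : Equiv.Perm (Fin m)) :
    (fun i j => border A (extPerm τ i) (extPerm τ j)) =
      border (fun i j => A (τ i) (τ j)) := by
  funext i j
  simp only [border]
  by_cases hi : (i : ℕ) < m <;> by_cases hj : (j : ℕ) < m
  · have e1 : extPerm τ i = Fin.castSucc (τ ⟨i, hi⟩) := dif_pos hi
    have e2 : extPerm τ j = Fin.castSucc (τ ⟨j, hj⟩) := dif_pos hj
    rw [e1, e2]
    simp [Fin.coe_castSucc, Fin.is_lt, dif_pos, hi, hj]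
  · have e1 : extPerm τ i = Fin.castSucc (τ ⟨i, hi⟩) := dif_pos hi
    have e2 : extPerm τ j = j := dif_neg hj
    rw [e1, e2]
    simp [Fin.is_lt, hi, hj]
  · have e1 : extPerm τ i = i := dif_neg hi
    have e2 : extPerm τ j = Fin.castSucc (τ ⟨j, hj⟩) := dif_pos hj
    rw [e1, e2]
    simp [Fin.is_lt, hi, hj]
  · have e1 : extPerm τ i = i := dif_neg hi
    have e2 : extPerm τ j = j := dif_neg hj
    rw [e1, e2]
    simp [hi, hj]

lemma border_skew {m : ℕ} (A : Matrix (Fin m) (Fin m) ℝ)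
    (hA : ∀ i j, A j i = - A i j) : ∀ i j, border A j i = - border A i j := by
  intro i j
  simp only [border]
  by_cases hi : (i : ℕ) < m <;> by_cases hj : (j : ℕ) < m <;>
    simp only [dif_pos, dif_neg, hi, hj, if_pos, if_neg, not_false_iff] <;>
    first
      | exact hA _ _
      | norm_num

lemma sort_exists {n : ℕ} (q : Fin n → ℝ) (hq : Function.Injective q) :
    ∃ τ : Equiv.Perm (Fin n), StrictAnti (fun i => q (τ i)) := by
  have mono : Monotone (q ∘ Tuple.sort q) := Tuple.monotone_sort q
  have sm : StrictMono (q ∘ Tuple.sort q) :=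
    mono.strictMono_of_injective (hq.comp (Tuple.sort q).injective)
  refine ⟨Fin.revPerm.trans (Tuple.sort q), ?_⟩
  intro i j hij
  exact sm (Fin.rev_lt_rev.2 hij)

lemma cross_ineq {b : ℝ} (hb : 0 < b) {x y z : ℝ} (hx : 0 < x) (hy : 0 < y) (hz : 0 < z) :
    (x + y) ^ (-b) * (y + z) ^ (-b) ≤ (x + y + z) ^ (-b) * y ^ (-b) := by
  have h1 : (0:ℝ) < (x + y + z) * y := by positivity
  have h2 : (x + y + z) * y ≤ (x + y) * (y + z) := by nlinarith
  calc (x + y) ^ (-b) * (y + z) ^ (-b) = ((x + y) * (y + z)) ^ (-b) := by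
        rw [Real.mul_rpow (by positivity) (by positivity)]
    _ ≤ ((x + y + z) * y) ^ (-b) :=
        Real.rpow_le_rpow_of_nonpos h1 h2 (by linarith)
    _ = (x + y + z) ^ (-b) * y ^ (-b) := Real.mul_rpow (by positivity) (by positivity)

lemma conv_diff {b : ℝ} (hb : 0 < b) {x y h : ℝ} (hx : 0 < x) (hxy : x ≤ y) (hh : 0 < h) :
    y ^ (-b) - (y + h) ^ (-b) ≤ x ^ (-b) - (x + h) ^ (-b) := by
  have key : AntitoneOn (fun t : ℝ => t ^ (-b) - (t + h) ^ (-b)) (Set.Icc x y) := by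
    have hder : ∀ t ∈ interior (Set.Icc x y),
        HasDerivAt (fun t : ℝ => t ^ (-b) - (t + h) ^ (-b))
          ((-b) * t ^ (-b - 1) - 1 * (-b) * (t + h) ^ (-b - 1)) t := by
      intro t ht
      rw [interior_Icc] at ht
      have ht0 : 0 < t := lt_of_le_of_lt hx.le ht.1
      exact (Real.hasDerivAt_rpow_const (Or.inl ht0.ne')).sub
        (((hasDerivAt_id t).add_const h).rpow_const (Or.inl (by positivity)))
    apply antitoneOn_of_deriv_nonpos (convex_Icc x y)
    · apply ContinuousOn.sub
      · exact ContinuousOn.rpow_const continuousOn_id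
          (fun t ht => Or.inl (by have := ht.1; intro h0; nlinarith))
      · exact ContinuousOn.rpow_const (continuousOn_id.add continuousOn_const)
          (fun t ht => Or.inl (by have := ht.1; intro h0; nlinarith))
    · intro t ht
      exact ((hder t ht).differentiableAt).differentiableWithinAt
    · intro t ht
      rw [(hder t ht).deriv]
      rw [interior_Icc] at ht
      have ht0 : 0 < t := lt_of_le_of_lt hx.le ht.1
      have hle : (t + h) ^ (-b - 1) ≤ t ^ (-b - 1) :=
        Real.rpow_le_rpow_of_nonpos ht0 (by linarith) (by linarith)
      nlinarith
  exact key (Set.left_mem_Icc.2 hxy) (Set.right_mem_Icc.2 hxy) hxy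

end Aux

/-! ### The sorted positivity lemmas -/

lemma skew_of_hQ {n : ℕ} {α : ℝ} {q : Fin n → ℝ} {Q : Matrix (Fin n) (Fin n) ℝ}
    (hQ : ∀ i j, Q i j = (q i - q j) * |q i - q j| ^ (-α - 2)) :
    ∀ i j, Q j i = - Q i j := by
  intro i j
  rw [hQ, hQ, abs_sub_comm (q j) (q i)]
  ring

lemma entry_eq {n : ℕ} {α : ℝ} {q : Fin n → ℝ} {Q : Matrix (Fin n) (Fin n) ℝ}
    (hQ : ∀ i j, Q i j = (q i - q j) * |q i - q j| ^ (-α - 2)) {i j : Fin n}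
    (h : q j < q i) : Q i j = (q i - q j) ^ (-(α + 1)) := by
  have hpos : 0 < q i - q j := sub_pos.2 h
  rw [hQ, abs_of_pos hpos, show (-α - 2 : ℝ) = (-(α + 1)) + (-1) by ring,
    Real.rpow_add hpos, Real.rpow_neg_one]
  field_simp

set_option maxHeartbeats 1000000 in
lemma sorted3 (α : ℝ) (hα : 0 < α) (q : Fin 3 → ℝ) (hqa : StrictAnti q)
    (Q : Matrix (Fin 3) (Fin 3) ℝ)
    (hQ : ∀ i j, Q i j = (q i - q j) * |q i - q j| ^ (-α - 2)) :
    0 < Pf (border Q) := by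
  have hskew := skew_of_hQ hQ
  rw [pf4 (border Q) (border_skew Q hskew)]
  have b01 : border Q 0 1 = Q 0 1 := rfl
  have b02 : border Q 0 2 = Q 0 2 := rfl
  have b12 : border Q 1 2 = Q 1 2 := rfl
  have b03 : border Q 0 3 = 1 := rfl
  have b13 : border Q 1 3 = 1 := rfl
  have b23 : border Q 2 3 = 1 := rfl
  rw [b01, b02, b12, b03, b13, b23]
  have E01 : Q 0 1 = (q 0 - q 1) ^ (-(α + 1)) :=
    entry_eq hQ (hqa (by decide : (0 : Fin 3) < 1))
  have E02 : Q 0 2 = (q 0 - q 2) ^ (-(α + 1)) :=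
    entry_eq hQ (hqa (by decide : (0 : Fin 3) < 2))
  have E12 : Q 1 2 = (q 1 - q 2) ^ (-(α + 1)) :=
    entry_eq hQ (hqa (by decide : (1 : Fin 3) < 2))
  rw [E01, E02, E12]
  have hb : (0:ℝ) < α + 1 := by linarith
  have hexp : -(α + 1) ≤ (0:ℝ) := by linarith
  have mono : ∀ a c : ℝ, 0 < a → a ≤ c → c ^ (-(α + 1)) ≤ a ^ (-(α + 1)) :=
    fun a c ha hac => Real.rpow_le_rpow_of_nonpos ha hac hexp
  have rpos : ∀ a : ℝ, 0 < a → (0:ℝ) < a ^ (-(α + 1)) :=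
    fun a ha => Real.rpow_pos_of_pos ha _
  have p01 : (0:ℝ) < q 0 - q 1 := sub_pos.2 (hqa (by decide : (0 : Fin 3) < 1))
  have p02 : (0:ℝ) < q 0 - q 2 := sub_pos.2 (hqa (by decide : (0 : Fin 3) < 2))
  have p12 : (0:ℝ) < q 1 - q 2 := sub_pos.2 (hqa (by decide : (1 : Fin 3) < 2))
  have m1 : (q 0 - q 2) ^ (-(α + 1)) ≤ (q 0 - q 1) ^ (-(α + 1)) := mono _ _ p01 (by linarith)
  have pos12 : (0:ℝ) < (q 1 - q 2) ^ (-(α + 1)) := rpos _ p12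
  linarith

set_option maxHeartbeats 1000000 in
lemma sorted4 (α : ℝ) (hα : 0 < α) (q : Fin 4 → ℝ) (hqa : StrictAnti q)
    (Q : Matrix (Fin 4) (Fin 4) ℝ)
    (hQ : ∀ i j, Q i j = (q i - q j) * |q i - q j| ^ (-α - 2)) :
    0 < Pf Q := by
  have hskew := skew_of_hQ hQ
  rw [pf4 Q hskew]
  have E01 : Q 0 1 = (q 0 - q 1) ^ (-(α + 1)) :=
    entry_eq hQ (hqa (by decide : (0 : Fin 4) < 1))
  have E02 : Q 0 2 = (q 0 - q 2) ^ (-(α + 1)) :=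
    entry_eq hQ (hqa (by decide : (0 : Fin 4) < 2))
  have E03 : Q 0 3 = (q 0 - q 3) ^ (-(α + 1)) :=
    entry_eq hQ (hqa (by decide : (0 : Fin 4) < 3))
  have E12 : Q 1 2 = (q 1 - q 2) ^ (-(α + 1)) :=
    entry_eq hQ (hqa (by decide : (1 : Fin 4) < 2))
  have E13 : Q 1 3 = (q 1 - q 3) ^ (-(α + 1)) :=
    entry_eq hQ (hqa (by decide : (1 : Fin 4) < 3))
  have E23 : Q 2 3 = (q 2 - q 3) ^ (-(α + 1)) :=
    entry_eq hQ (hqa (by decide : (2 : Fin 4) < 3))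
  rw [E01, E02, E03, E12, E13, E23]
  have hb : (0:ℝ) < α + 1 := by linarith
  have hexp : -(α + 1) ≤ (0:ℝ) := by linarith
  have mono : ∀ a c : ℝ, 0 < a → a ≤ c → c ^ (-(α + 1)) ≤ a ^ (-(α + 1)) :=
    fun a c ha hac => Real.rpow_le_rpow_of_nonpos ha hac hexp
  have rpos : ∀ a : ℝ, 0 < a → (0:ℝ) < a ^ (-(α + 1)) :=
    fun a ha => Real.rpow_pos_of_pos ha _
  have p01 : (0:ℝ) < q 0 - q 1 := sub_pos.2 (hqa (by decide : (0 : Fin 4) < 1))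
  have p02 : (0:ℝ) < q 0 - q 2 := sub_pos.2 (hqa (by decide : (0 : Fin 4) < 2))
  have p03 : (0:ℝ) < q 0 - q 3 := sub_pos.2 (hqa (by decide : (0 : Fin 4) < 3))
  have p12 : (0:ℝ) < q 1 - q 2 := sub_pos.2 (hqa (by decide : (1 : Fin 4) < 2))
  have p13 : (0:ℝ) < q 1 - q 3 := sub_pos.2 (hqa (by decide : (1 : Fin 4) < 3))
  have p23 : (0:ℝ) < q 2 - q 3 := sub_pos.2 (hqa (by decide : (2 : Fin 4) < 3))
  have m1 : (q 0 - q 2) ^ (-(α + 1)) ≤ (q 0 - q 1) ^ (-(α + 1)) := mono _ _ p01 (by linarith)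
  have m2 : (q 1 - q 3) ^ (-(α + 1)) ≤ (q 2 - q 3) ^ (-(α + 1)) := mono _ _ p23 (by linarith)
  have hprod : (q 0 - q 2) ^ (-(α + 1)) * (q 1 - q 3) ^ (-(α + 1)) ≤ (q 0 - q 1) ^ (-(α + 1)) * (q 2 - q 3) ^ (-(α + 1)) :=
    mul_le_mul m1 m2 (rpos _ p13).le (rpos _ p01).le
  have hpos : (0:ℝ) < (q 0 - q 3) ^ (-(α + 1)) * (q 1 - q 2) ^ (-(α + 1)) := mul_pos (rpos _ p03) (rpos _ p12)
  linarith

set_option maxHeartbeats 2000000 in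
lemma sorted5 (α : ℝ) (hα : 0 < α) (q : Fin 5 → ℝ) (hqa : StrictAnti q)
    (Q : Matrix (Fin 5) (Fin 5) ℝ)
    (hQ : ∀ i j, Q i j = (q i - q j) * |q i - q j| ^ (-α - 2)) :
    0 < Pf (border Q) := by
  have hskew := skew_of_hQ hQ
  rw [pf6 (border Q) (border_skew Q hskew)]
  have b01 : border Q 0 1 = Q 0 1 := rfl
  have b02 : border Q 0 2 = Q 0 2 := rfl
  have b03 : border Q 0 3 = Q 0 3 := rfl
  have b04 : border Q 0 4 = Q 0 4 := rfl
  have b12 : border Q 1 2 = Q 1 2 := rfl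
  have b13 : border Q 1 3 = Q 1 3 := rfl
  have b14 : border Q 1 4 = Q 1 4 := rfl
  have b23 : border Q 2 3 = Q 2 3 := rfl
  have b24 : border Q 2 4 = Q 2 4 := rfl
  have b34 : border Q 3 4 = Q 3 4 := rfl
  have b05 : border Q 0 5 = 1 := rfl
  have b15 : border Q 1 5 = 1 := rfl
  have b25 : border Q 2 5 = 1 := rfl
  have b35 : border Q 3 5 = 1 := rfl
  have b45 : border Q 4 5 = 1 := rfl
  rw [b01, b02, b03, b04, b12, b13, b14, b23, b24, b34, b05, b15, b25, b35, b45]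
  have E01 : Q 0 1 = (q 0 - q 1) ^ (-(α + 1)) :=
    entry_eq hQ (hqa (by decide : (0 : Fin 5) < 1))
  have E02 : Q 0 2 = (q 0 - q 2) ^ (-(α + 1)) :=
    entry_eq hQ (hqa (by decide : (0 : Fin 5) < 2))
  have E03 : Q 0 3 = (q 0 - q 3) ^ (-(α + 1)) :=
    entry_eq hQ (hqa (by decide : (0 : Fin 5) < 3))
  have E04 : Q 0 4 = (q 0 - q 4) ^ (-(α + 1)) :=
    entry_eq hQ (hqa (by decide : (0 : Fin 5) < 4))
  have E12 : Q 1 2 = (q 1 - q 2) ^ (-(α + 1)) :=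
    entry_eq hQ (hqa (by decide : (1 : Fin 5) < 2))
  have E13 : Q 1 3 = (q 1 - q 3) ^ (-(α + 1)) :=
    entry_eq hQ (hqa (by decide : (1 : Fin 5) < 3))
  have E14 : Q 1 4 = (q 1 - q 4) ^ (-(α + 1)) :=
    entry_eq hQ (hqa (by decide : (1 : Fin 5) < 4))
  have E23 : Q 2 3 = (q 2 - q 3) ^ (-(α + 1)) :=
    entry_eq hQ (hqa (by decide : (2 : Fin 5) < 3))
  have E24 : Q 2 4 = (q 2 - q 4) ^ (-(α + 1)) :=
    entry_eq hQ (hqa (by decide : (2 : Fin 5) < 4))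
  have E34 : Q 3 4 = (q 3 - q 4) ^ (-(α + 1)) :=
    entry_eq hQ (hqa (by decide : (3 : Fin 5) < 4))
  rw [E01, E02, E03, E04, E12, E13, E14, E23, E24, E34]
  have hb : (0:ℝ) < α + 1 := by linarith
  have hexp : -(α + 1) ≤ (0:ℝ) := by linarith
  have mono : ∀ a c : ℝ, 0 < a → a ≤ c → c ^ (-(α + 1)) ≤ a ^ (-(α + 1)) :=
    fun a c ha hac => Real.rpow_le_rpow_of_nonpos ha hac hexp
  have rpos : ∀ a : ℝ, 0 < a → (0:ℝ) < a ^ (-(α + 1)) :=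
    fun a ha => Real.rpow_pos_of_pos ha _
  have p01 : (0:ℝ) < q 0 - q 1 := sub_pos.2 (hqa (by decide : (0 : Fin 5) < 1))
  have p02 : (0:ℝ) < q 0 - q 2 := sub_pos.2 (hqa (by decide : (0 : Fin 5) < 2))
  have p03 : (0:ℝ) < q 0 - q 3 := sub_pos.2 (hqa (by decide : (0 : Fin 5) < 3))
  have p04 : (0:ℝ) < q 0 - q 4 := sub_pos.2 (hqa (by decide : (0 : Fin 5) < 4))
  have p12 : (0:ℝ) < q 1 - q 2 := sub_pos.2 (hqa (by decide : (1 : Fin 5) < 2))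
  have p13 : (0:ℝ) < q 1 - q 3 := sub_pos.2 (hqa (by decide : (1 : Fin 5) < 3))
  have p14 : (0:ℝ) < q 1 - q 4 := sub_pos.2 (hqa (by decide : (1 : Fin 5) < 4))
  have p23 : (0:ℝ) < q 2 - q 3 := sub_pos.2 (hqa (by decide : (2 : Fin 5) < 3))
  have p24 : (0:ℝ) < q 2 - q 4 := sub_pos.2 (hqa (by decide : (2 : Fin 5) < 4))
  have p34 : (0:ℝ) < q 3 - q 4 := sub_pos.2 (hqa (by decide : (3 : Fin 5) < 4))
  -- F1 : P1234 - P0234 ≥ 0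
  have cd1 : (q 1 - q 3) ^ (-(α + 1)) - (q 0 - q 3) ^ (-(α + 1)) ≤ (q 1 - q 2) ^ (-(α + 1)) - (q 0 - q 2) ^ (-(α + 1)) := by
    have h := conv_diff hb (x := q 1 - q 2) (y := q 1 - q 3) (h := q 0 - q 1) p12
      (by linarith) p01
    rw [show q 1 - q 3 + (q 0 - q 1) = q 0 - q 3 by ring,
      show q 1 - q 2 + (q 0 - q 1) = q 0 - q 2 by ring] at h
    exact h
  have m24 : (q 2 - q 4) ^ (-(α + 1)) ≤ (q 3 - q 4) ^ (-(α + 1)) := mono _ _ p34 (by linarith)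
  have nn2 : (0:ℝ) ≤ (q 1 - q 2) ^ (-(α + 1)) - (q 0 - q 2) ^ (-(α + 1)) := by
    have := mono _ _ p12 (by linarith : q 1 - q 2 ≤ q 0 - q 2)
    linarith
  have F1 : ((q 1 - q 3) ^ (-(α + 1)) - (q 0 - q 3) ^ (-(α + 1))) * (q 2 - q 4) ^ (-(α + 1)) ≤ ((q 1 - q 2) ^ (-(α + 1)) - (q 0 - q 2) ^ (-(α + 1))) * (q 3 - q 4) ^ (-(α + 1)) :=
    mul_le_mul cd1 m24 (rpos _ p24).le nn2
  have F1b : (0:ℝ) ≤ ((q 1 - q 4) ^ (-(α + 1)) - (q 0 - q 4) ^ (-(α + 1))) * (q 2 - q 3) ^ (-(α + 1)) := by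
    have h1 := mono _ _ p14 (by linarith : q 1 - q 4 ≤ q 0 - q 4)
    exact mul_nonneg (by linarith) (rpos _ p23).le
  -- F2 : P0123 - P0124 ≥ 0
  have cd2 : (q 1 - q 3) ^ (-(α + 1)) - (q 1 - q 4) ^ (-(α + 1)) ≤ (q 2 - q 3) ^ (-(α + 1)) - (q 2 - q 4) ^ (-(α + 1)) := by
    have h := conv_diff hb (x := q 2 - q 3) (y := q 1 - q 3) (h := q 3 - q 4) p23
      (by linarith) p34
    rw [show q 1 - q 3 + (q 3 - q 4) = q 1 - q 4 by ring,
      show q 2 - q 3 + (q 3 - q 4) = q 2 - q 4 by ring] at h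
    exact h
  have m0201 : (q 0 - q 2) ^ (-(α + 1)) ≤ (q 0 - q 1) ^ (-(α + 1)) := mono _ _ p01 (by linarith)
  have nn3 : (0:ℝ) ≤ (q 1 - q 3) ^ (-(α + 1)) - (q 1 - q 4) ^ (-(α + 1)) := by
    have := mono _ _ p13 (by linarith : q 1 - q 3 ≤ q 1 - q 4)
    linarith
  have F2 : (q 0 - q 2) ^ (-(α + 1)) * ((q 1 - q 3) ^ (-(α + 1)) - (q 1 - q 4) ^ (-(α + 1))) ≤ (q 0 - q 1) ^ (-(α + 1)) * ((q 2 - q 3) ^ (-(α + 1)) - (q 2 - q 4) ^ (-(α + 1))) :=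
    mul_le_mul m0201 cd2 nn3 (rpos _ p01).le
  have F2b : (0:ℝ) ≤ (q 1 - q 2) ^ (-(α + 1)) * ((q 0 - q 3) ^ (-(α + 1)) - (q 0 - q 4) ^ (-(α + 1))) := by
    have h1 := mono _ _ p03 (by linarith : q 0 - q 3 ≤ q 0 - q 4)
    exact mul_nonneg (rpos _ p12).le (by linarith)
  -- F3 : P0134 > 0
  have m0301 : (q 0 - q 3) ^ (-(α + 1)) ≤ (q 0 - q 1) ^ (-(α + 1)) := mono _ _ p01 (by linarith)
  have m1434 : (q 1 - q 4) ^ (-(α + 1)) ≤ (q 3 - q 4) ^ (-(α + 1)) := mono _ _ p34 (by linarith)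
  have F3 : (q 0 - q 3) ^ (-(α + 1)) * (q 1 - q 4) ^ (-(α + 1)) ≤ (q 0 - q 1) ^ (-(α + 1)) * (q 3 - q 4) ^ (-(α + 1)) :=
    mul_le_mul m0301 m1434 (rpos _ p14).le (rpos _ p01).le
  have F3b : (0:ℝ) < (q 0 - q 4) ^ (-(α + 1)) * (q 1 - q 3) ^ (-(α + 1)) := mul_pos (rpos _ p04) (rpos _ p13)
  linarith [F1, F1b, F2, F2b, F3, F3b]

set_option maxHeartbeats 2000000 in
lemma sorted6 (α : ℝ) (hα : 0 < α) (q : Fin 6 → ℝ) (hqa : StrictAnti q)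
    (Q : Matrix (Fin 6) (Fin 6) ℝ)
    (hQ : ∀ i j, Q i j = (q i - q j) * |q i - q j| ^ (-α - 2)) :
    0 < Pf Q := by
  have hskew := skew_of_hQ hQ
  rw [pf6 Q hskew]
  have E01 : Q 0 1 = (q 0 - q 1) ^ (-(α + 1)) :=
    entry_eq hQ (hqa (by decide : (0 : Fin 6) < 1))
  have E02 : Q 0 2 = (q 0 - q 2) ^ (-(α + 1)) :=
    entry_eq hQ (hqa (by decide : (0 : Fin 6) < 2))
  have E03 : Q 0 3 = (q 0 - q 3) ^ (-(α + 1)) :=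
    entry_eq hQ (hqa (by decide : (0 : Fin 6) < 3))
  have E04 : Q 0 4 = (q 0 - q 4) ^ (-(α + 1)) :=
    entry_eq hQ (hqa (by decide : (0 : Fin 6) < 4))
  have E05 : Q 0 5 = (q 0 - q 5) ^ (-(α + 1)) :=
    entry_eq hQ (hqa (by decide : (0 : Fin 6) < 5))
  have E12 : Q 1 2 = (q 1 - q 2) ^ (-(α + 1)) :=
    entry_eq hQ (hqa (by decide : (1 : Fin 6) < 2))
  have E13 : Q 1 3 = (q 1 - q 3) ^ (-(α + 1)) :=
    entry_eq hQ (hqa (by decide : (1 : Fin 6) < 3))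
  have E14 : Q 1 4 = (q 1 - q 4) ^ (-(α + 1)) :=
    entry_eq hQ (hqa (by decide : (1 : Fin 6) < 4))
  have E15 : Q 1 5 = (q 1 - q 5) ^ (-(α + 1)) :=
    entry_eq hQ (hqa (by decide : (1 : Fin 6) < 5))
  have E23 : Q 2 3 = (q 2 - q 3) ^ (-(α + 1)) :=
    entry_eq hQ (hqa (by decide : (2 : Fin 6) < 3))
  have E24 : Q 2 4 = (q 2 - q 4) ^ (-(α + 1)) :=
    entry_eq hQ (hqa (by decide : (2 : Fin 6) < 4))
  have E25 : Q 2 5 = (q 2 - q 5) ^ (-(α + 1)) :=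
    entry_eq hQ (hqa (by decide : (2 : Fin 6) < 5))
  have E34 : Q 3 4 = (q 3 - q 4) ^ (-(α + 1)) :=
    entry_eq hQ (hqa (by decide : (3 : Fin 6) < 4))
  have E35 : Q 3 5 = (q 3 - q 5) ^ (-(α + 1)) :=
    entry_eq hQ (hqa (by decide : (3 : Fin 6) < 5))
  have E45 : Q 4 5 = (q 4 - q 5) ^ (-(α + 1)) :=
    entry_eq hQ (hqa (by decide : (4 : Fin 6) < 5))
  rw [E01, E02, E03, E04, E05, E12, E13, E14, E15, E23, E24, E25, E34, E35, E45]
  have hb : (0:ℝ) < α + 1 := by linarith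
  have hexp : -(α + 1) ≤ (0:ℝ) := by linarith
  have mono : ∀ a c : ℝ, 0 < a → a ≤ c → c ^ (-(α + 1)) ≤ a ^ (-(α + 1)) :=
    fun a c ha hac => Real.rpow_le_rpow_of_nonpos ha hac hexp
  have rpos : ∀ a : ℝ, 0 < a → (0:ℝ) < a ^ (-(α + 1)) :=
    fun a ha => Real.rpow_pos_of_pos ha _
  have p01 : (0:ℝ) < q 0 - q 1 := sub_pos.2 (hqa (by decide : (0 : Fin 6) < 1))
  have p02 : (0:ℝ) < q 0 - q 2 := sub_pos.2 (hqa (by decide : (0 : Fin 6) < 2))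
  have p03 : (0:ℝ) < q 0 - q 3 := sub_pos.2 (hqa (by decide : (0 : Fin 6) < 3))
  have p04 : (0:ℝ) < q 0 - q 4 := sub_pos.2 (hqa (by decide : (0 : Fin 6) < 4))
  have p05 : (0:ℝ) < q 0 - q 5 := sub_pos.2 (hqa (by decide : (0 : Fin 6) < 5))
  have p12 : (0:ℝ) < q 1 - q 2 := sub_pos.2 (hqa (by decide : (1 : Fin 6) < 2))
  have p13 : (0:ℝ) < q 1 - q 3 := sub_pos.2 (hqa (by decide : (1 : Fin 6) < 3))
  have p14 : (0:ℝ) < q 1 - q 4 := sub_pos.2 (hqa (by decide : (1 : Fin 6) < 4))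
  have p15 : (0:ℝ) < q 1 - q 5 := sub_pos.2 (hqa (by decide : (1 : Fin 6) < 5))
  have p23 : (0:ℝ) < q 2 - q 3 := sub_pos.2 (hqa (by decide : (2 : Fin 6) < 3))
  have p24 : (0:ℝ) < q 2 - q 4 := sub_pos.2 (hqa (by decide : (2 : Fin 6) < 4))
  have p25 : (0:ℝ) < q 2 - q 5 := sub_pos.2 (hqa (by decide : (2 : Fin 6) < 5))
  have p34 : (0:ℝ) < q 3 - q 4 := sub_pos.2 (hqa (by decide : (3 : Fin 6) < 4))
  have p35 : (0:ℝ) < q 3 - q 5 := sub_pos.2 (hqa (by decide : (3 : Fin 6) < 5))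
  have p45 : (0:ℝ) < q 4 - q 5 := sub_pos.2 (hqa (by decide : (4 : Fin 6) < 5))
  have m1 : (q 1 - q 4) ^ (-(α + 1)) ≤ (q 1 - q 3) ^ (-(α + 1)) := mono _ _ p13 (by linarith)
  have m2 : (q 3 - q 5) ^ (-(α + 1)) ≤ (q 4 - q 5) ^ (-(α + 1)) := mono _ _ p45 (by linarith)
  have hP : (0:ℝ) ≤ (q 1 - q 3) ^ (-(α + 1)) * (q 4 - q 5) ^ (-(α + 1)) - (q 1 - q 4) ^ (-(α + 1)) * (q 3 - q 5) ^ (-(α + 1)) + (q 1 - q 5) ^ (-(α + 1)) * (q 3 - q 4) ^ (-(α + 1)) := by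
    have h1 : (q 1 - q 4) ^ (-(α + 1)) * (q 3 - q 5) ^ (-(α + 1)) ≤ (q 1 - q 3) ^ (-(α + 1)) * (q 4 - q 5) ^ (-(α + 1)) :=
      mul_le_mul m1 m2 (rpos _ p35).le (rpos _ p13).le
    have h2 : (0:ℝ) ≤ (q 1 - q 5) ^ (-(α + 1)) * (q 3 - q 4) ^ (-(α + 1)) := (mul_pos (rpos _ p15) (rpos _ p34)).le
    linarith
  have cd1 : (q 2 - q 4) ^ (-(α + 1)) - (q 1 - q 4) ^ (-(α + 1)) ≤ (q 2 - q 3) ^ (-(α + 1)) - (q 1 - q 3) ^ (-(α + 1)) := by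
    have h := conv_diff hb (x := q 2 - q 3) (y := q 2 - q 4) (h := q 1 - q 2) p23
      (by linarith) p12
    rw [show q 2 - q 4 + (q 1 - q 2) = q 1 - q 4 by ring,
      show q 2 - q 3 + (q 1 - q 2) = q 1 - q 3 by ring] at h
    exact h
  have nn4 : (0:ℝ) ≤ (q 2 - q 3) ^ (-(α + 1)) - (q 1 - q 3) ^ (-(α + 1)) := by
    have := mono _ _ p23 (by linarith : q 2 - q 3 ≤ q 1 - q 3)
    linarith
  have prod1 : ((q 2 - q 4) ^ (-(α + 1)) - (q 1 - q 4) ^ (-(α + 1))) * (q 3 - q 5) ^ (-(α + 1)) ≤ ((q 2 - q 3) ^ (-(α + 1)) - (q 1 - q 3) ^ (-(α + 1))) * (q 4 - q 5) ^ (-(α + 1)) :=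
    mul_le_mul cd1 m2 (rpos _ p35).le nn4
  have m15 : (q 1 - q 5) ^ (-(α + 1)) ≤ (q 2 - q 5) ^ (-(α + 1)) := mono _ _ p25 (by linarith)
  have prod2 : (0:ℝ) ≤ ((q 2 - q 5) ^ (-(α + 1)) - (q 1 - q 5) ^ (-(α + 1))) * (q 3 - q 4) ^ (-(α + 1)) :=
    mul_nonneg (by linarith) (rpos _ p34).le
  have e2 : (q 1 - q 3) ^ (-(α + 1)) * (q 4 - q 5) ^ (-(α + 1)) - (q 1 - q 4) ^ (-(α + 1)) * (q 3 - q 5) ^ (-(α + 1)) + (q 1 - q 5) ^ (-(α + 1)) * (q 3 - q 4) ^ (-(α + 1)) ≤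
      (q 2 - q 3) ^ (-(α + 1)) * (q 4 - q 5) ^ (-(α + 1)) - (q 2 - q 4) ^ (-(α + 1)) * (q 3 - q 5) ^ (-(α + 1)) + (q 2 - q 5) ^ (-(α + 1)) * (q 3 - q 4) ^ (-(α + 1)) := by
    linarith [prod1, prod2]
  have m0201 : (q 0 - q 2) ^ (-(α + 1)) ≤ (q 0 - q 1) ^ (-(α + 1)) := mono _ _ p01 (by linarith)
  have A1 : (q 0 - q 2) ^ (-(α + 1)) * ((q 1 - q 3) ^ (-(α + 1)) * (q 4 - q 5) ^ (-(α + 1)) - (q 1 - q 4) ^ (-(α + 1)) * (q 3 - q 5) ^ (-(α + 1)) + (q 1 - q 5) ^ (-(α + 1)) * (q 3 - q 4) ^ (-(α + 1))) ≤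
      (q 0 - q 1) ^ (-(α + 1)) * ((q 1 - q 3) ^ (-(α + 1)) * (q 4 - q 5) ^ (-(α + 1)) - (q 1 - q 4) ^ (-(α + 1)) * (q 3 - q 5) ^ (-(α + 1)) + (q 1 - q 5) ^ (-(α + 1)) * (q 3 - q 4) ^ (-(α + 1))) :=
    mul_le_mul_of_nonneg_right m0201 hP
  have A2 : (q 0 - q 1) ^ (-(α + 1)) * ((q 1 - q 3) ^ (-(α + 1)) * (q 4 - q 5) ^ (-(α + 1)) - (q 1 - q 4) ^ (-(α + 1)) * (q 3 - q 5) ^ (-(α + 1)) + (q 1 - q 5) ^ (-(α + 1)) * (q 3 - q 4) ^ (-(α + 1))) ≤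
      (q 0 - q 1) ^ (-(α + 1)) * ((q 2 - q 3) ^ (-(α + 1)) * (q 4 - q 5) ^ (-(α + 1)) - (q 2 - q 4) ^ (-(α + 1)) * (q 3 - q 5) ^ (-(α + 1)) + (q 2 - q 5) ^ (-(α + 1)) * (q 3 - q 4) ^ (-(α + 1))) :=
    mul_le_mul_of_nonneg_left e2 (rpos _ p01).le
  have D1 : (q 0 - q 5) ^ (-(α + 1)) * ((q 1 - q 3) ^ (-(α + 1)) * (q 2 - q 4) ^ (-(α + 1))) ≤ (q 0 - q 5) ^ (-(α + 1)) * ((q 1 - q 2) ^ (-(α + 1)) * (q 3 - q 4) ^ (-(α + 1))) := by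
    have h1 : (q 1 - q 3) ^ (-(α + 1)) ≤ (q 1 - q 2) ^ (-(α + 1)) := mono _ _ p12 (by linarith)
    have h2 : (q 2 - q 4) ^ (-(α + 1)) ≤ (q 3 - q 4) ^ (-(α + 1)) := mono _ _ p34 (by linarith)
    have h3 : (q 1 - q 3) ^ (-(α + 1)) * (q 2 - q 4) ^ (-(α + 1)) ≤ (q 1 - q 2) ^ (-(α + 1)) * (q 3 - q 4) ^ (-(α + 1)) :=
      mul_le_mul h1 h2 (rpos _ p24).le (rpos _ p12).le
    exact mul_le_mul_of_nonneg_left h3 (rpos _ p05).le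
  have D2 : (q 0 - q 4) ^ (-(α + 1)) * ((q 1 - q 2) ^ (-(α + 1)) * (q 3 - q 5) ^ (-(α + 1))) ≤ (q 0 - q 3) ^ (-(α + 1)) * ((q 1 - q 2) ^ (-(α + 1)) * (q 4 - q 5) ^ (-(α + 1))) := by
    have h1 : (q 0 - q 4) ^ (-(α + 1)) ≤ (q 0 - q 3) ^ (-(α + 1)) := mono _ _ p03 (by linarith)
    have h3 : (q 0 - q 4) ^ (-(α + 1)) * (q 3 - q 5) ^ (-(α + 1)) ≤ (q 0 - q 3) ^ (-(α + 1)) * (q 4 - q 5) ^ (-(α + 1)) :=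
      mul_le_mul h1 m2 (rpos _ p35).le (rpos _ p03).le
    have h4 := mul_le_mul_of_nonneg_left h3 (rpos _ p12).le
    linarith [h4]
  have D3 : (q 0 - q 3) ^ (-(α + 1)) * ((q 1 - q 4) ^ (-(α + 1)) * (q 2 - q 5) ^ (-(α + 1))) ≤ (q 0 - q 4) ^ (-(α + 1)) * ((q 1 - q 3) ^ (-(α + 1)) * (q 2 - q 5) ^ (-(α + 1))) := by
    have h := cross_ineq hb (x := q 0 - q 1) (y := q 1 - q 3) (z := q 3 - q 4) p01 p13 p34
    rw [show q 0 - q 1 + (q 1 - q 3) + (q 3 - q 4) = q 0 - q 4 by ring,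
      show q 0 - q 1 + (q 1 - q 3) = q 0 - q 3 by ring,
      show q 1 - q 3 + (q 3 - q 4) = q 1 - q 4 by ring] at h
    have h4 := mul_le_mul_of_nonneg_right h (rpos _ p25).le
    linarith [h4]
  have D4 : (q 0 - q 4) ^ (-(α + 1)) * ((q 1 - q 5) ^ (-(α + 1)) * (q 2 - q 3) ^ (-(α + 1))) ≤ (q 0 - q 5) ^ (-(α + 1)) * ((q 1 - q 4) ^ (-(α + 1)) * (q 2 - q 3) ^ (-(α + 1))) := by
    have h := cross_ineq hb (x := q 0 - q 1) (y := q 1 - q 4) (z := q 4 - q 5) p01 p14 p45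
    rw [show q 0 - q 1 + (q 1 - q 4) + (q 4 - q 5) = q 0 - q 5 by ring,
      show q 0 - q 1 + (q 1 - q 4) = q 0 - q 4 by ring,
      show q 1 - q 4 + (q 4 - q 5) = q 1 - q 5 by ring] at h
    have h4 := mul_le_mul_of_nonneg_right h (rpos _ p23).le
    linarith [h4]
  have spare : (0:ℝ) < (q 0 - q 3) ^ (-(α + 1)) * ((q 1 - q 5) ^ (-(α + 1)) * (q 2 - q 4) ^ (-(α + 1))) :=
    mul_pos (rpos _ p03) (mul_pos (rpos _ p15) (rpos _ p24))
  linarith [A1, A2, D1, D2, D3, D4, spare]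

/-! ### Main theorem -/

theorem stmt8 (n : ℕ) (hn : 2 ≤ n) (hn6 : n ≤ 6) (α : ℝ) (hα : 0 < α)
    (q : Fin n → ℝ) (hq : Function.Injective q)
    (Q : Matrix (Fin n) (Fin n) ℝ)
    (hQ : ∀ i j, Q i j = (q i - q j) * |q i - q j| ^ (-α - 2)) :
    (Even n → Pf Q ≠ 0) ∧
    (Odd n → Pf (border Q) ≠ 0) ∧
    (n = 5 → StrictAnti q → 0 < Pf (border Q)) := by
  interval_cases n
  · -- n = 2
    refine ⟨fun _ => ?_, fun h => absurd h (by decide), fun h => absurd h (by omega)⟩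
    rw [pf2 Q (skew_of_hQ hQ)]
    have hne : q 0 - q 1 ≠ 0 := sub_ne_zero.2 (fun h => absurd (hq h) (by decide))
    rw [hQ 0 1]
    exact mul_ne_zero hne (ne_of_gt (Real.rpow_pos_of_pos (abs_pos.2 hne) _))
  · -- n = 3
    refine ⟨fun h => absurd h (by decide), fun _ => ?_, fun h => absurd h (by omega)⟩
    obtain ⟨τ, hτ⟩ := sort_exists q hq
    have h2 : 0 < Pf (border (fun i j => Q (τ i) (τ j))) :=
      sorted3 α hα (fun i => q (τ i)) hτ (fun i j => Q (τ i) (τ j))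
        (fun i j => hQ (τ i) (τ j))
    have h1 := Pf_conj (border Q) (extPerm τ)
    rw [border_conj Q τ] at h1
    intro h0
    rw [h0, mul_zero] at h1
    rw [h1] at h2
    exact lt_irrefl 0 h2
  · -- n = 4
    refine ⟨fun _ => ?_, fun h => absurd h (by decide), fun h => absurd h (by omega)⟩
    obtain ⟨τ, hτ⟩ := sort_exists q hq
    have h2 : 0 < Pf (fun i j => Q (τ i) (τ j)) :=
      sorted4 α hα (fun i => q (τ i)) hτ (fun i j => Q (τ i) (τ j))
        (fun i j => hQ (τ i) (τ j))
    have h1 := Pf_conj Q τ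
    intro h0
    rw [h0, mul_zero] at h1
    rw [h1] at h2
    exact lt_irrefl 0 h2
  · -- n = 5
    refine ⟨fun h => absurd h (by decide), fun _ => ?_, fun _ hs => sorted5 α hα q hs Q hQ⟩
    obtain ⟨τ, hτ⟩ := sort_exists q hq
    have h2 : 0 < Pf (border (fun i j => Q (τ i) (τ j))) :=
      sorted5 α hα (fun i => q (τ i)) hτ (fun i j => Q (τ i) (τ j))
        (fun i j => hQ (τ i) (τ j))
    have h1 := Pf_conj (border Q) (extPerm τ)
    rw [border_conj Q τ] at h1
    intro h0
    rw [h0, mul_zero] at h1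
    rw [h1] at h2
    exact lt_irrefl 0 h2
  · -- n = 6
    refine ⟨fun _ => ?_, fun h => absurd h (by decide), fun h => absurd h (by omega)⟩
    obtain ⟨τ, hτ⟩ := sort_exists q hq
    have h2 : 0 < Pf (fun i j => Q (τ i) (τ j)) :=
      sorted6 α hα (fun i => q (τ i)) hτ (fun i j => Q (τ i) (τ j))
        (fun i j => hQ (τ i) (τ j))
    have h1 := Pf_conj Q τ
    intro h0
    rw [h0, mul_zero] at h1
    rw [h1] at h2
    exact lt_irrefl 0 h2
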